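/- Let F be a field of characteristic not 2 and let M be the generic 3×3 matrix with entries x_{ij} over R = F[x_{ij}]. Let 𝔪 = ⟨x_{ij} : 1≤i,j≤3⟩ be the homogeneous maximal ideal, and let Q = P_2(M) + ⟨x_{ij}² : 1≤i,j≤3⟩. Then Q is an 𝔪-primary ideal of R. -/
import Mathlib


open MvPolynomial

lemma m_eq_span_range (F : Type*) [Field F] :
    Ideal.span {f : MvPolynomial (Fin 3 × Fin 3) F | ∃ i j : Fin 3, f = X (i, j)} =
      Ideal.span (Set.range (X : Fin 3 × Fin 3 → MvPolynomial (Fin 3 × Fin 3) F)) := by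
  congr 1
  ext f
  constructor
  · rintro ⟨i, j, rfl⟩; exact ⟨(i, j), rfl⟩
  · rintro ⟨⟨i, j⟩, rfl⟩; exact ⟨i, j, rfl⟩

lemma span_range_X_eq_ker (F : Type*) [Field F] :
    Ideal.span (Set.range (X : Fin 3 × Fin 3 → MvPolynomial (Fin 3 × Fin 3) F)) =
      RingHom.ker (eval (0 : Fin 3 × Fin 3 → F)) := by
  apply le_antisymm
  · rw [Ideal.span_le]
    rintro f ⟨p, rfl⟩
    simp [RingHom.mem_ker]
  · intro f hf
    rw [RingHom.mem_ker] at hf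
    have h0 : MvPolynomial.coeff 0 f = 0 := by
      have : constantCoeff f = 0 := by rw [← MvPolynomial.eval_zero]; exact hf
      simpa [MvPolynomial.constantCoeff_eq] using this
    have : f ∈ Ideal.span (MvPolynomial.X '' (Set.univ : Set (Fin 3 × Fin 3)) :
        Set (MvPolynomial (Fin 3 × Fin 3) F)) := by
      rw [MvPolynomial.mem_ideal_span_X_image]
      intro m hm
      by_contra hc
      push_neg at hc
      have : m = 0 := by
        ext i
        exact hc i (Set.mem_univ i)
      rw [this, MvPolynomial.mem_support_iff] at hm
      exact hm h0
    simpa [Set.image_univ] using this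

lemma m_isMaximal (F : Type*) [Field F] :
    (Ideal.span {f : MvPolynomial (Fin 3 × Fin 3) F |
        ∃ i j : Fin 3, f = X (i, j)}).IsMaximal := by
  rw [m_eq_span_range, span_range_X_eq_ker]
  exact RingHom.ker_isMaximal_of_surjective _ fun c => ⟨C c, eval_C c⟩

/-- `M` is the generic 3×3 matrix with entries `x_{ij} = X (i,j)`, `𝔪` is the
homogeneous maximal ideal generated by all variables, and
`Q = P₂(M) + ⟨x_{ij}²⟩`.  Then `Q` is `𝔪`-primary: `Q` is a primary ideal
whose radical is `𝔪`. -/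
theorem Q_is_m_primary (F : Type*) [Field F] (h2 : (2 : F) ≠ 0) :
    (Ideal.span {f : MvPolynomial (Fin 3 × Fin 3) F |
        ∃ i k j l : Fin 3, i < k ∧ j < l ∧
          f = X (i, j) * X (k, l) + X (k, j) * X (i, l)} +
      Ideal.span {f : MvPolynomial (Fin 3 × Fin 3) F |
        ∃ i j : Fin 3, f = X (i, j) ^ 2}).IsPrimary ∧
    (Ideal.span {f : MvPolynomial (Fin 3 × Fin 3) F |
        ∃ i k j l : Fin 3, i < k ∧ j < l ∧
          f = X (i, j) * X (k, l) + X (k, j) * X (i, l)} +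
      Ideal.span {f : MvPolynomial (Fin 3 × Fin 3) F |
        ∃ i j : Fin 3, f = X (i, j) ^ 2}).radical =
      Ideal.span {f : MvPolynomial (Fin 3 × Fin 3) F |
        ∃ i j : Fin 3, f = X (i, j)} := by
  set m : Ideal (MvPolynomial (Fin 3 × Fin 3) F) :=
    Ideal.span {f | ∃ i j : Fin 3, f = X (i, j)} with hm
  set Q : Ideal (MvPolynomial (Fin 3 × Fin 3) F) :=
    Ideal.span {f | ∃ i k j l : Fin 3, i < k ∧ j < l ∧
          f = X (i, j) * X (k, l) + X (k, j) * X (i, l)} +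
      Ideal.span {f | ∃ i j : Fin 3, f = X (i, j) ^ 2} with hQ
  have hmmax : m.IsMaximal := m_isMaximal F
  have hX : ∀ i j : Fin 3, (X (i, j) : MvPolynomial (Fin 3 × Fin 3) F) ∈ m :=
    fun i j => Ideal.subset_span ⟨i, j, rfl⟩
  have hrad : Q.radical = m := by
    apply le_antisymm
    · have hQm : Q ≤ m := by
        rw [hQ]
        apply sup_le
        · rw [Ideal.span_le]
          rintro f ⟨i, k, j, l, _, _, rfl⟩
          exact Ideal.add_mem _ (Ideal.mul_mem_right _ _ (hX i j))
            (Ideal.mul_mem_right _ _ (hX k j))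
        · rw [Ideal.span_le]
          rintro f ⟨i, j, rfl⟩
          rw [sq]
          exact Ideal.mul_mem_right _ _ (hX i j)
      calc Q.radical ≤ m.radical := Ideal.radical_mono hQm
        _ = m := hmmax.isPrime.radical
    · rw [hm, Ideal.span_le]
      rintro f ⟨i, j, rfl⟩
      exact ⟨2, Ideal.mem_sup_right (Ideal.subset_span ⟨i, j, rfl⟩)⟩
  refine ⟨?_, hrad⟩
  exact Ideal.isPrimary_of_isMaximal_radical (hrad ▸ hmmax)
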